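/- Let K = GF(2^m) with m \geq 1, let \alpha^0, \ldots, \alpha^{m-1} be a basis of K over GF(2), let t \geq 4, and let F(x) = \sum_{j=0}^{t} f_j x^j be a polynomial over K, with f_j = 0 for j > t. Set K_t = \lceil (t-4)/5 \rceil and for 0 \leq i \leq K_t define the 2-polynomials L_i(x) = f_{5i+1} x + f_{5i+2} x^2 + f_{5i+4} x^4 + f_{5i+8} x^8. Let x_0 = 0, x_1, \ldots, x_{2^m-1} be a Gray code enumeration of K with respect to the given basis, i.e., for each j \geq 1 there is \delta(j) \in \{0, \ldots, m-1\} with x_j - x_{j-1} = \alpha^{\delta(j)}. Define recursively A_i^{(0)} = f_{5i} and A_i^{(j)} = A_i^{(j-1)} + L_i(\alpha^{\delta(j)}) for 1 \leq j \leq 2^m - 1. Then for every j with 0 \leq j \leq 2^m - 1, F(x_j) = f_3 x_j^3 + \sum_{i=0}^{K_t} x_j^{5i} A_i^{(j)}. -/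

import Mathlib

lemma sum_id_stmt7 {R : Type*} [CommRing R] (f : ℕ → R) (y : R) (n : ℕ) :
    f 3 * y ^ 3
      + ∑ i ∈ Finset.range (n + 1),
          y ^ (5 * i) * (f (5*i) + f (5*i+1)*y + f (5*i+2)*y^2 + f (5*i+4)*y^4 + f (5*i+8)*y^8)
      + (f (5*n+5) * y^(5*n+5) + f (5*n+6) * y^(5*n+6) + f (5*n+7) * y^(5*n+7))
    = ∑ k ∈ Finset.range (5*n + 9), f k * y ^ k := by
  induction n with
  | zero =>
      simp only [Finset.sum_range_succ, Finset.sum_range_zero]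
      norm_num
      ring
  | succ n ih =>
      have hR : ∑ k ∈ Finset.range (5*(n+1) + 9), f k * y ^ k
          = (∑ k ∈ Finset.range (5*n + 9), f k * y ^ k)
            + (f (5*n+9)*y^(5*n+9) + f (5*n+10)*y^(5*n+10) + f (5*n+11)*y^(5*n+11)
              + f (5*n+12)*y^(5*n+12) + f (5*n+13)*y^(5*n+13)) := by
        rw [show 5*(n+1)+9 = (((((5*n+9)+1)+1)+1)+1)+1 from by ring,
            Finset.sum_range_succ, Finset.sum_range_succ, Finset.sum_range_succ,
            Finset.sum_range_succ, Finset.sum_range_succ]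
        ring
      rw [Finset.sum_range_succ, hR, ← ih,
          show 5*(n+1) = 5*n+5 from by ring]
      simp only [add_assoc]
      norm_num
      ring

/-- Correctness of the fast root-finding algorithm.  Let `K = GF(2^m)`
(`m ≥ 1`) with basis `α^0, …, α^{m-1}` over `GF(2)`, let `t ≥ 4` and
`F(x) = ∑_{j=0}^t f_j x^j` with `f_j = 0` for `j > t`.  Put `K_t = ⌈(t-4)/5⌉` and
`L_i(x) = f_{5i+1} x + f_{5i+2} x^2 + f_{5i+4} x^4 + f_{5i+8} x^8`.  Given a Gray code
enumeration `x_0 = 0, x_1, …, x_{2^m-1}` of `K` with `x_j - x_{j-1} = α^{δ(j)}`, define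
`A_i^{(0)} = f_{5i}` and `A_i^{(j)} = A_i^{(j-1)} + L_i(α^{δ(j)})`.  Then
`F(x_j) = f_3 x_j^3 + ∑_{i=0}^{K_t} x_j^{5i} A_i^{(j)}` for all `0 ≤ j ≤ 2^m - 1`. -/
theorem stmt_7 (m : ℕ) (hm : 1 ≤ m) (α : GaloisField 2 m)
    (b : Module.Basis (Fin m) (ZMod 2) (GaloisField 2 m))
    (hb : ∀ k : Fin m, b k = α ^ (k : ℕ))
    (t : ℕ) (ht : 4 ≤ t) (f : ℕ → GaloisField 2 m) (hf : ∀ j, t < j → f j = 0)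
    (x : ℕ → GaloisField 2 m) (hx0 : x 0 = 0)
    (hxbij : Set.BijOn x (Set.Iio (2 ^ m)) Set.univ)
    (δ : ℕ → Fin m)
    (hδ : ∀ j, 1 ≤ j → j ≤ 2 ^ m - 1 → x j - x (j - 1) = α ^ ((δ j : ℕ)))
    (A : ℕ → ℕ → GaloisField 2 m)
    (hA0 : ∀ i, A i 0 = f (5 * i))
    (hArec : ∀ i j, 1 ≤ j → j ≤ 2 ^ m - 1 →
        A i j = A i (j - 1)
          + (f (5 * i + 1) * α ^ ((δ j : ℕ))
            + f (5 * i + 2) * (α ^ ((δ j : ℕ))) ^ 2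
            + f (5 * i + 4) * (α ^ ((δ j : ℕ))) ^ 4
            + f (5 * i + 8) * (α ^ ((δ j : ℕ))) ^ 8))
    (j : ℕ) (hj : j ≤ 2 ^ m - 1) :
    ∑ k ∈ Finset.range (t + 1), f k * (x j) ^ k
      = f 3 * (x j) ^ 3
        + ∑ i ∈ Finset.range (⌈((t : ℚ) - 4) / 5⌉₊ + 1), (x j) ^ (5 * i) * A i j := by
  -- Frobenius facts in characteristic 2
  have h2 : ∀ a b : GaloisField 2 m, (a + b) ^ 2 = a ^ 2 + b ^ 2 := fun a b => add_pow_char a b 2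
  have h4 : ∀ a b : GaloisField 2 m, (a + b) ^ 4 = a ^ 4 + b ^ 4 := by
    intro a b
    have : (a + b) ^ 4 = ((a + b) ^ 2) ^ 2 := by ring
    rw [this, h2, h2]; ring
  have h8 : ∀ a b : GaloisField 2 m, (a + b) ^ 8 = a ^ 8 + b ^ 8 := by
    intro a b
    have : (a + b) ^ 8 = ((a + b) ^ 4) ^ 2 := by ring
    rw [this, h4, h2]; ring
  -- closed form for A i j
  have hAclosed : ∀ j, j ≤ 2 ^ m - 1 → ∀ i,
      A i j = f (5*i) + f (5*i+1) * x j + f (5*i+2) * (x j)^2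
        + f (5*i+4) * (x j)^4 + f (5*i+8) * (x j)^8 := by
    intro j
    induction j with
    | zero => intro _ i; rw [hA0, hx0]; ring
    | succ j ih =>
        intro hj1 i
        have hjle : j ≤ 2 ^ m - 1 := Nat.le_of_succ_le hj1
        have hrec := hArec i (j + 1) (Nat.le_add_left 1 j) hj1
        simp only [Nat.add_sub_cancel] at hrec
        have hδ' := hδ (j + 1) (Nat.le_add_left 1 j) hj1
        simp only [Nat.add_sub_cancel] at hδ'
        have hx : x (j + 1) = x j + α ^ ((δ (j+1) : ℕ)) := by
          have := sub_eq_iff_eq_add.mp hδ'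
          linear_combination this
        rw [hrec, ih hjle i, hx, h2, h4, h8]
        ring
  -- bound on the ceiling
  set Kt := ⌈((t : ℚ) - 4) / 5⌉₊ with hKt
  have hceil : ((t : ℚ) - 4) / 5 ≤ (Kt : ℚ) := Nat.le_ceil _
  have htK : t ≤ 5 * Kt + 4 := by
    have : (t : ℚ) ≤ 5 * (Kt : ℚ) + 4 := by linarith [hceil]
    exact_mod_cast this
  -- rewrite the RHS sum using the closed form
  have hsum : ∑ i ∈ Finset.range (Kt + 1), (x j) ^ (5 * i) * A i j
      = ∑ i ∈ Finset.range (Kt + 1),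
          (x j) ^ (5 * i) * (f (5*i) + f (5*i+1) * x j + f (5*i+2) * (x j)^2
            + f (5*i+4) * (x j)^4 + f (5*i+8) * (x j)^8) := by
    refine Finset.sum_congr rfl fun i _ => ?_
    rw [hAclosed j hj i]
  rw [hsum]
  have hz5 : f (5*Kt+5) = 0 := hf _ (by omega)
  have hz6 : f (5*Kt+6) = 0 := hf _ (by omega)
  have hz7 : f (5*Kt+7) = 0 := hf _ (by omega)
  have hid := sum_id_stmt7 f (x j) Kt
  rw [hz5, hz6, hz7] at hid
  simp only [zero_mul, add_zero] at hid
  rw [hid]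
  -- finally, the two sums agree since the tail vanishes
  refine Finset.sum_subset ?_ ?_
  · exact Finset.range_subset_range.mpr (by omega)
  · intro k _ hk
    rw [hf k (by simp at hk ⊢; omega)]
    ring
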